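/- arXiv:2504.10321 — 3 statements merged into one kernel-verified Lean document; each statement's English description precedes it below -/
import Mathlib

section
/- Let R be a commutative ring, let k ≥ 1 and ν ≥ 0 be natural numbers, and let x = (x_0,…,x_ν) and y = (y_0,…,y_ν) be families of elements of R. Let B be the k × 2(ν+k) block matrix [W(x) | W(y)] and let A be the 2(ν+k) × k block matrix with top block −H(y) and bottom block H(x). Then the matrix product B·A is the k × k zero matrix. -/
/-- The wide Toeplitz band matrix `W(x)`: the `k × (ν+k)` matrix with
`W(x)[i,j] = x (j-i)` when `i ≤ j ≤ i + ν` and `0` otherwise. -/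
def Wmat {R : Type*} [CommRing R] (k ν : ℕ) (x : Fin (ν + 1) → R) :
    Matrix (Fin k) (Fin (ν + k)) R :=
  Matrix.of fun i j =>
    if h : (i : ℕ) ≤ (j : ℕ) ∧ (j : ℕ) ≤ (i : ℕ) + ν then
      x ⟨(j : ℕ) - (i : ℕ), by omega⟩
    else 0

/-- The tall Hankel band matrix `H(x)`: the `(ν+k) × k` matrix with
`H(x)[j,i] = x (ν+k-1-j-i)` when `k-1 ≤ j+i ≤ ν+k-1` and `0` otherwise. -/
def Hmat {R : Type*} [CommRing R] (k ν : ℕ) (x : Fin (ν + 1) → R) :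
    Matrix (Fin (ν + k)) (Fin k) R :=
  Matrix.of fun j i =>
    if h : k - 1 ≤ (j : ℕ) + (i : ℕ) ∧ (j : ℕ) + (i : ℕ) ≤ ν + k - 1 then
      x ⟨ν + k - 1 - (j : ℕ) - (i : ℕ), by omega⟩
    else 0

/-- The matrices `B = [W(x) | W(y)]` and `A = [-H(y); H(x)]` of the monad
`0 → O(-1)^k → O^{2ν+2k} → O(1)^k` on `ℙ^{2ν+1}` satisfy `B · A = 0`. -/
theorem stmt3 {R : Type*} [CommRing R] (k ν : ℕ) (hk : 1 ≤ k)
    (x y : Fin (ν + 1) → R) :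
    Matrix.fromCols (Wmat k ν x) (Wmat k ν y) *
        Matrix.fromRows (-(Hmat k ν y)) (Hmat k ν x) = 0 := by
  have key : ∀ (u v : Fin (ν + 1) → R) (i i' : Fin k),
      ∑ j, Wmat k ν u i j * Hmat k ν v j i' = ∑ j, Wmat k ν v i j * Hmat k ν u j i' := by
    intro u v i i'
    have hi' : (i' : ℕ) < k := i'.isLt
    have hi : (i : ℕ) < k := i.isLt
    refine Finset.sum_nbij' (fun j => if h : (i:ℕ) ≤ j ∧ (j:ℕ) ≤ i + ν ∧
        k - 1 ≤ (j:ℕ) + i' ∧ (j:ℕ) + i' ≤ ν + k - 1 then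
        (⟨(i:ℕ) + ν + k - 1 - j - i', by omega⟩ : Fin (ν + k)) else j)
      (fun j => if h : (i:ℕ) ≤ j ∧ (j:ℕ) ≤ i + ν ∧
        k - 1 ≤ (j:ℕ) + i' ∧ (j:ℕ) + i' ≤ ν + k - 1 then
        (⟨(i:ℕ) + ν + k - 1 - j - i', by omega⟩ : Fin (ν + k)) else j)
      (fun _ _ => Finset.mem_univ _) (fun _ _ => Finset.mem_univ _) ?_ ?_ ?_
    · intro j _
      beta_reduce
      by_cases h : (i:ℕ) ≤ j ∧ (j:ℕ) ≤ i + ν ∧ k - 1 ≤ (j:ℕ) + i' ∧ (j:ℕ) + i' ≤ ν + k - 1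
      · rw [dif_pos h, dif_pos (by simp only [Fin.val_mk]; omega)]
        exact Fin.ext (by simp only [Fin.val_mk]; omega)
      · rw [dif_neg h, dif_neg h]
    · intro j _
      beta_reduce
      by_cases h : (i:ℕ) ≤ j ∧ (j:ℕ) ≤ i + ν ∧ k - 1 ≤ (j:ℕ) + i' ∧ (j:ℕ) + i' ≤ ν + k - 1
      · rw [dif_pos h, dif_pos (by simp only [Fin.val_mk]; omega)]
        exact Fin.ext (by simp only [Fin.val_mk]; omega)
      · rw [dif_neg h, dif_neg h]
    · intro j _
      beta_reduce
      by_cases h : (i:ℕ) ≤ j ∧ (j:ℕ) ≤ i + ν ∧ k - 1 ≤ (j:ℕ) + i' ∧ (j:ℕ) + i' ≤ ν + k - 1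
      · rw [dif_pos h]
        simp only [Wmat, Hmat, Matrix.of_apply]
        rw [dif_pos (by omega), dif_pos (by omega), dif_pos (by omega), dif_pos (by omega)]
        have e1 : ((⟨(j:ℕ) - (i:ℕ), by omega⟩ : Fin (ν+1)) :) =
            (⟨ν + k - 1 - ((i:ℕ) + ν + k - 1 - (j:ℕ) - (i':ℕ)) - (i':ℕ), by omega⟩ : Fin (ν+1)) :=
          Fin.ext (by simp; omega)
        have e2 : ((⟨ν + k - 1 - (j:ℕ) - (i':ℕ), by omega⟩ : Fin (ν+1)) :) =
            (⟨(i:ℕ) + ν + k - 1 - (j:ℕ) - (i':ℕ) - (i:ℕ), by omega⟩ : Fin (ν+1)) :=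
          Fin.ext (by simp; omega)
        rw [e1, e2]
        ring
      · rw [dif_neg h]
        simp only [Wmat, Hmat, Matrix.of_apply]
        split_ifs <;> first | omega | ring
  rw [Matrix.fromCols_mul_fromRows]
  ext i i'
  simp only [Matrix.add_apply, Matrix.mul_apply, Matrix.neg_apply, Matrix.zero_apply, mul_neg,
    Finset.sum_neg_distrib]
  rw [key x y i i']
  ring
end

section
/- Let R be a commutative ring, let k ≥ 1 and n ≥ 0 be natural numbers, and let u = (u_0,…,u_n) and v = (v_0,…,v_n) be families of elements of R. Let f_α be the k × 2(n+k) block matrix [H'(v) | −H'(u)] and let g_α be the 2(n+k) × k block matrix with top block T(u) and bottom block T(v). Then the product f_α·g_α is the k × k zero matrix. -/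
/-- The wide Hankel band matrix `H'(u)`: the `k × (n+k)` matrix with
`H'(u)[i,j] = u (n+k-1-i-j)` when `k-1 ≤ i+j ≤ n+k-1` and `0` otherwise. -/
def Hw {R : Type*} [CommRing R] (k n : ℕ) (u : Fin (n + 1) → R) :
    Matrix (Fin k) (Fin (n + k)) R :=
  Matrix.of fun i j =>
    if h : k - 1 ≤ (i : ℕ) + (j : ℕ) ∧ (i : ℕ) + (j : ℕ) ≤ n + k - 1 then
      u ⟨n + k - 1 - (i : ℕ) - (j : ℕ), by omega⟩
    else 0

/-- The tall Toeplitz band matrix `T(u)`: the `(n+k) × k` matrix with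
`T(u)[j,i] = u (j-i)` when `i ≤ j ≤ i + n` and `0` otherwise. -/
def Tt {R : Type*} [CommRing R] (k n : ℕ) (u : Fin (n + 1) → R) :
    Matrix (Fin (n + k)) (Fin k) R :=
  Matrix.of fun j i =>
    if h : (i : ℕ) ≤ (j : ℕ) ∧ (j : ℕ) ≤ (i : ℕ) + n then
      u ⟨(j : ℕ) - (i : ℕ), by omega⟩
    else 0

/-- term of the product sum, as a function of a natural number index -/
def Fm {R : Type*} [CommRing R] (k n : ℕ) (a b : Fin (n + 1) → R) (i i' j : ℕ) : R :=
  if h : k - 1 ≤ i + j ∧ i + j ≤ n + k - 1 ∧ i' ≤ j ∧ j ≤ i' + n then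
    a ⟨n + k - 1 - i - j, by omega⟩ * b ⟨j - i', by omega⟩
  else 0

lemma entry {R : Type*} [CommRing R] (k n : ℕ) (a b : Fin (n + 1) → R)
    (i i' : Fin k) (j : Fin (n + k)) :
    Hw k n a i j * Tt k n b j i' = Fm k n a b i i' j := by
  unfold Hw Tt Fm
  simp only [Matrix.of_apply]
  by_cases h1 : k - 1 ≤ (i : ℕ) + (j : ℕ) ∧ (i : ℕ) + (j : ℕ) ≤ n + k - 1 <;>
    by_cases h2 : (i' : ℕ) ≤ (j : ℕ) ∧ (j : ℕ) ≤ (i' : ℕ) + n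
  · rw [dif_pos h1, dif_pos h2, dif_pos ⟨h1.1, h1.2, h2.1, h2.2⟩]
  · rw [dif_pos h1, dif_neg h2, dif_neg (by omega), mul_zero]
  · rw [dif_neg h1, dif_pos h2, dif_neg (by omega), zero_mul]
  · rw [dif_neg h1, dif_neg h2, dif_neg (by omega), zero_mul]

lemma Fm_zero_of_big {R : Type*} [CommRing R] (k n : ℕ) (a b : Fin (n + 1) → R)
    (i i' j : ℕ) (h : ¬ (k - 1 ≤ i + j ∧ i + j ≤ n + k - 1 ∧ i' ≤ j ∧ j ≤ i' + n)) :
    Fm k n a b i i' j = 0 := by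
  unfold Fm; rw [dif_neg h]

lemma Fm_reflect {R : Type*} [CommRing R] (k n : ℕ) (a b : Fin (n + 1) → R)
    (i i' j : ℕ) (hi : i < k) (hi' : i' < k) (hj : j ≤ n + k - 1 - i + i') :
    Fm k n a b i i' j = Fm k n b a i i' (n + k - 1 - i + i' - j) := by
  unfold Fm
  set j' := n + k - 1 - i + i' - j with hj'
  by_cases h : k - 1 ≤ i + j ∧ i + j ≤ n + k - 1 ∧ i' ≤ j ∧ j ≤ i' + n
  · have h' : k - 1 ≤ i + j' ∧ i + j' ≤ n + k - 1 ∧ i' ≤ j' ∧ j' ≤ i' + n := by omega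
    rw [dif_pos h, dif_pos h']
    have e1 : n + k - 1 - i - j = j' - i' := by omega
    have e2 : j - i' = n + k - 1 - i - j' := by omega
    rw [mul_comm]
    congr 2 <;> simp [Fin.ext_iff] <;> omega
  · have h' : ¬ (k - 1 ≤ i + j' ∧ i + j' ≤ n + k - 1 ∧ i' ≤ j' ∧ j' ≤ i' + n) := by omega
    rw [dif_neg h, dif_neg h']

lemma sum_range_shift {M : Type*} [AddCommMonoid M] (A N : ℕ) (F : ℕ → M)
    (hA : ∀ j, A ≤ j → F j = 0) (hN : ∀ j, N + 1 ≤ j → F j = 0) :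
    ∑ j ∈ Finset.range A, F j = ∑ j ∈ Finset.range (N + 1), F j := by
  rcases le_total A (N + 1) with h | h
  · exact Finset.sum_subset (Finset.range_subset_range.2 h)
      (fun j hj hj2 => hA j (by simp only [Finset.mem_range] at *; omega))
  · exact (Finset.sum_subset (Finset.range_subset_range.2 h)
      (fun j hj hj2 => hN j (by simp only [Finset.mem_range] at *; omega))).symm

lemma key_sum {R : Type*} [CommRing R] (k n : ℕ) (a b : Fin (n + 1) → R)
    (i i' : Fin k) :
    ∑ j ∈ Finset.range (n + k), Fm k n a b i i' j
      = ∑ j ∈ Finset.range (n + k), Fm k n b a i i' j := by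
  set N := n + k - 1 - (i : ℕ) + (i' : ℕ) with hN
  have hi := i.isLt
  have hi' := i'.isLt
  have hz : ∀ (c d : Fin (n+1) → R) j, n + k ≤ j ∨ N + 1 ≤ j →
      Fm k n c d (i:ℕ) (i':ℕ) j = 0 := by
    intro c d j hj
    apply Fm_zero_of_big
    omega
  rw [sum_range_shift (n+k) N _ (fun j hj => hz a b j (Or.inl hj))
      (fun j hj => hz a b j (Or.inr hj)),
    sum_range_shift (n+k) N _ (fun j hj => hz b a j (Or.inl hj))
      (fun j hj => hz b a j (Or.inr hj)),
    ← Finset.sum_range_reflect (fun j => Fm k n b a (i:ℕ) (i':ℕ) j) (N+1)]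
  apply Finset.sum_congr rfl
  intro j hj
  simp only [Finset.mem_range] at hj
  have : N + 1 - 1 - j = N - j := by omega
  rw [this]
  exact Fm_reflect k n a b i i' j hi hi' (by omega)


/-- The α-blocks `f_α = [H'(v) | -H'(u)]` and `g_α = [T(u); T(v)]` of the maps
of the monad on `(ℙⁿ)² × (ℙᵐ)² × (ℙˡ)²` satisfy `f_α · g_α = 0`. -/
theorem stmt6 {R : Type*} [CommRing R] (k n : ℕ) (hk : 1 ≤ k)
    (u v : Fin (n + 1) → R) :
    Matrix.fromCols (Hw k n v) (-(Hw k n u)) *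
        Matrix.fromRows (Tt k n u) (Tt k n v) = 0 := by
  rw [Matrix.fromCols_mul_fromRows]
  ext i i'
  simp only [Matrix.add_apply, Matrix.neg_mul, Matrix.neg_apply, Matrix.zero_apply,
    Matrix.mul_apply]
  rw [add_neg_eq_zero]
  calc ∑ j, Hw k n v i j * Tt k n u j i'
      = ∑ j ∈ Finset.range (n + k), Fm k n v u i i' j := by
        rw [← Fin.sum_univ_eq_sum_range (fun j => Fm k n v u i i' j)]
        exact Finset.sum_congr rfl fun j _ => entry k n v u i i' j
    _ = ∑ j ∈ Finset.range (n + k), Fm k n u v i i' j := key_sum k n v u i i'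
    _ = ∑ j, Hw k n u i j * Tt k n v j i' := by
        rw [← Fin.sum_univ_eq_sum_range (fun j => Fm k n u v i i' j)]
        exact Finset.sum_congr rfl fun j _ => (entry k n u v i i' j).symm
end

section
/- Let R be a commutative ring, let k ≥ 1 and n, m, l ≥ 0 be natural numbers, and let u, v (each indexed 0,…,n), w, x (each indexed 0,…,m), and y, z (each indexed 0,…,l) be families of elements of R. Let f be the k × (2(n+k)+2(m+k)+2(l+k)) block matrix [H'(v) | −H'(u) | H'(x) | −H'(w) | H'(z) | −H'(y)] and let g be the (2(n+k)+2(m+k)+2(l+k)) × k block matrix whose vertical blocks are T(u), T(v), T(w), T(x), T(y), T(z) in that order. Then the product f·g is the k × k zero matrix. -/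
private def E {R : Type*} [CommRing R] {n : ℕ} (a : Fin (n+1) → R) (p : ℕ) : R :=
  if h : p < n + 1 then a ⟨p, h⟩ else 0

private lemma entry_eq {R : Type*} [CommRing R] (k n : ℕ) (a b : Fin (n+1) → R)
    (i i' : Fin k) :
    (Hw k n a * Tt k n b) i i' =
      ∑ j ∈ Finset.univ.filter (fun j : Fin (n+k) =>
        (k-1 ≤ (i:ℕ)+(j:ℕ) ∧ (i:ℕ)+(j:ℕ) ≤ n+k-1) ∧ ((i':ℕ) ≤ (j:ℕ) ∧ (j:ℕ) ≤ (i':ℕ)+n)),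
        E a (n+k-1-(i:ℕ)-(j:ℕ)) * E b ((j:ℕ)-(i':ℕ)) := by
  rw [Matrix.mul_apply, Finset.sum_filter]
  refine Finset.sum_congr rfl fun j _ => ?_
  simp only [Hw, Tt, Matrix.of_apply, E]
  split_ifs with h1 h2 h3 h4 h5 <;> first | (simp; done) | (exfalso; omega)

private lemma key {R : Type*} [CommRing R] (k n : ℕ) (a b : Fin (n+1) → R) :
    Hw k n a * Tt k n b = Hw k n b * Tt k n a := by
  ext i i'
  rw [entry_eq, entry_eq]
  refine Finset.sum_nbij'
    (fun j => ⟨min (n+k-1-(i:ℕ)-(j:ℕ)+(i':ℕ)) (n+k-1), by have := i.isLt; omega⟩)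
    (fun j => ⟨min (n+k-1-(i:ℕ)-(j:ℕ)+(i':ℕ)) (n+k-1), by have := i.isLt; omega⟩)
    ?_ ?_ ?_ ?_ ?_ <;>
    intro j hj <;> simp only [Finset.mem_filter, Finset.mem_univ, true_and] at hj ⊢
  · omega
  · omega
  · ext; simp only [Fin.val_mk]; omega
  · ext; simp only [Fin.val_mk]; omega
  · rw [mul_comm]
    congr 1 <;> · congr 1; omega

/-- The matrices `f = [H'(v) | -H'(u) | H'(x) | -H'(w) | H'(z) | -H'(y)]` and
`g = [T(u); T(v); T(w); T(x); T(y); T(z)]` of the monad on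
`(ℙⁿ)² × (ℙᵐ)² × (ℙˡ)²` satisfy `f · g = 0`. -/
theorem stmt7 {R : Type*} [CommRing R] (k n m l : ℕ) (hk : 1 ≤ k)
    (u v : Fin (n + 1) → R) (w x : Fin (m + 1) → R) (y z : Fin (l + 1) → R) :
    Matrix.fromCols (Matrix.fromCols (Hw k n v) (-(Hw k n u)))
        (Matrix.fromCols (Matrix.fromCols (Hw k m x) (-(Hw k m w)))
          (Matrix.fromCols (Hw k l z) (-(Hw k l y)))) *
      Matrix.fromRows (Matrix.fromRows (Tt k n u) (Tt k n v))
        (Matrix.fromRows (Matrix.fromRows (Tt k m w) (Tt k m x))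
          (Matrix.fromRows (Tt k l y) (Tt k l z))) = 0 := by
  simp only [Matrix.fromCols_mul_fromRows, Matrix.neg_mul]
  rw [key k n v u, key k m x w, key k l z y]
  abel
end
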